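/- arXiv:2009.05424 — 7 statements merged into one kernel-verified Lean document; each statement's English description precedes it below -/
import Mathlib

section
/- Let p be a prime number. The localization of the ring ℤ[X]/(X^p − 1) away from p is isomorphic, as a commutative ring, to the product ring ℤ[1/p] × (ℤ[X]/(Φ_p))[1/p], where the first factor is the localization of ℤ away from p and the second is the localization of ℤ[X]/(Φ_p) away from p. -/
open Polynomial

set_option synthInstance.maxHeartbeats 1000000
set_option maxHeartbeats 1000000

/-- For a prime `p`, the localization of `ℤ[X]/(X^p − 1)` away from `p` is
isomorphic as a commutative ring to `ℤ[1/p] × (ℤ[X]/(Φ_p))[1/p]`. -/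
theorem spectrum_decomposition_ring (p : ℕ) (hp : p.Prime) :
    Nonempty
      (Localization.Away ((p : ℕ) : Polynomial ℤ ⧸ Ideal.span {(X : Polynomial ℤ) ^ p - 1}) ≃+*
        Localization.Away (p : ℤ) ×
          Localization.Away
            ((p : ℕ) : Polynomial ℤ ⧸ Ideal.span {cyclotomic p ℤ})) := by
  haveI := Fact.mk hp
  set Φ : ℤ[X] := cyclotomic p ℤ with hΦ
  set I : Ideal ℤ[X] := Ideal.span {(X : ℤ[X]) ^ p - 1} with hI
  set J : Ideal ℤ[X] := Ideal.span {Φ} with hJ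
  set R := ℤ[X] ⧸ I with hR
  set S := ℤ[X] ⧸ J with hS
  set L1 := Localization.Away (p : ℤ) with hL1
  set L2 := Localization.Away ((p : ℕ) : S) with hL2
  -- key polynomial facts
  have key : (X - 1 : ℤ[X]) * Φ = X ^ p - 1 := by
    rw [hΦ, cyclotomic_prime, mul_comm, geom_sum_mul]
  have hΦ1 : eval 1 Φ = (p : ℤ) := eval_one_cyclotomic_prime
  have hW : ∃ W : ℤ[X], Φ = (X - 1) * W + C (p : ℤ) := by
    have h : (X - C (1:ℤ)) ∣ Φ - C (p : ℤ) := by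
      rw [dvd_iff_isRoot]
      simp [IsRoot, hΦ1]
    obtain ⟨W, hWeq⟩ := h
    refine ⟨W, ?_⟩
    have h2 := hWeq
    rw [map_one] at h2
    linear_combination h2
  -- the two ring homs
  have hker1 : ∀ a ∈ I, ((algebraMap ℤ L1).comp (evalRingHom (1:ℤ))) a = 0 := by
    intro a ha
    rw [hI, Ideal.mem_span_singleton] at ha
    obtain ⟨c, rfl⟩ := ha
    simp
  have hΦdvd : Φ ∣ (X : ℤ[X]) ^ p - 1 := ⟨X - 1, by rw [← key]; ring⟩
  have hmkΦ : Ideal.Quotient.mk J Φ = 0 := by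
    rw [Ideal.Quotient.eq_zero_iff_mem, hJ, Ideal.mem_span_singleton]
  have hker2 : ∀ a ∈ I, ((algebraMap S L2).comp (Ideal.Quotient.mk J)) a = 0 := by
    intro a ha
    rw [hI, Ideal.mem_span_singleton] at ha
    obtain ⟨c, rfl⟩ := ha
    have h0 : Ideal.Quotient.mk J ((X : ℤ[X]) ^ p - 1) = 0 := by
      rw [Ideal.Quotient.eq_zero_iff_mem, hJ, Ideal.mem_span_singleton]
      exact hΦdvd
    simp [h0]
  let ψ1 : R →+* L1 := Ideal.Quotient.lift I ((algebraMap ℤ L1).comp (evalRingHom (1:ℤ))) hker1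
  let ψ2 : R →+* L2 := Ideal.Quotient.lift I ((algebraMap S L2).comp (Ideal.Quotient.mk J)) hker2
  let φ : R →+* L1 × L2 := ψ1.prod ψ2
  letI : Algebra R (L1 × L2) := φ.toAlgebra
  have halg : algebraMap R (L1 × L2) = φ := rfl
  have hψ1mk : ∀ Q : ℤ[X], ψ1 (Ideal.Quotient.mk I Q) = algebraMap ℤ L1 (eval 1 Q) := fun _ => rfl
  have hψ2mk : ∀ Q : ℤ[X], ψ2 (Ideal.Quotient.mk I Q) = algebraMap S L2 (Ideal.Quotient.mk J Q) :=
    fun _ => rfl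
  haveI hloc2 : IsLocalization (Submonoid.powers ((p:ℕ):S)) L2 := Localization.isLocalization
  -- p is a unit in the target
  have hpu : IsUnit (algebraMap R (L1 × L2) ((p : ℕ) : R)) := by
    rw [halg, map_natCast]
    refine isUnit_iff_exists_inv.mpr ?_
    have h1 : IsUnit ((p : ℕ) : L1) := by
      have := IsLocalization.Away.algebraMap_isUnit (S := L1) (p : ℤ)
      simpa using this
    have h2 : IsUnit ((p : ℕ) : L2) := by
      have := IsLocalization.Away.algebraMap_isUnit (S := L2) ((p : ℕ) : S)
      simpa using this
    obtain ⟨u1, hu1⟩ := isUnit_iff_exists_inv.mp h1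
    obtain ⟨u2, hu2⟩ := isUnit_iff_exists_inv.mp h2
    exact ⟨(u1, u2), by simp [Prod.ext_iff, hu1, hu2]⟩
  haveI : IsLocalization.Away ((p : ℕ) : R) (L1 × L2) := by
    refine ⟨⟨?_, ?_, ?_⟩⟩
    · rintro ⟨x, n, rfl⟩
      simpa using hpu.pow n
    · rintro ⟨z1, z2⟩
      obtain ⟨⟨a, s1⟩, ha⟩ := IsLocalization.surj (Submonoid.powers (p : ℤ)) z1
      obtain ⟨n, hn⟩ := s1.2
      obtain ⟨⟨b, s2⟩, hb⟩ := IsLocalization.surj (Submonoid.powers ((p : ℕ) : S)) z2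
      obtain ⟨m, hm⟩ := s2.2
      obtain ⟨B, hB⟩ := Ideal.Quotient.mk_surjective b
      dsimp only at ha hb hn hm
      rw [← hn] at ha
      rw [← hm] at hb
      set G : ℤ[X] := C (a * (p:ℤ)^m) * Φ + (B * (p:ℤ[X])^n) * ((p:ℤ[X]) - Φ) with hG
      refine ⟨⟨Ideal.Quotient.mk I G, ⟨((p:ℕ) : R)^(n+m+1), n+m+1, rfl⟩⟩, ?_⟩
      rw [halg]
      have heval : eval 1 G = a * ((p:ℤ)^m * (p:ℤ)) := by
        simp [hG, hΦ1]; ring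
      ext
      · show z1 * ψ1 (((p:ℕ) : R)^(n+m+1)) = ψ1 (Ideal.Quotient.mk I G)
        have hψ1p : ψ1 (((p:ℕ) : R)^(n+m+1)) = algebraMap ℤ L1 ((p:ℤ)^(n+m+1)) := by
          simp
        rw [hψ1p, hψ1mk, heval]
        have e : ((p:ℤ))^(n+m+1) = (p:ℤ)^n * ((p:ℤ)^m * (p:ℤ)) := by ring
        rw [e, map_mul, ← mul_assoc, ha, ← map_mul]
      · show z2 * ψ2 (((p:ℕ) : R)^(n+m+1)) = ψ2 (Ideal.Quotient.mk I G)
        have hψ2p : ψ2 (((p:ℕ) : R)^(n+m+1)) = algebraMap S L2 (((p:ℕ):S)^(n+m+1)) := by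
          simp
        have hmkG : Ideal.Quotient.mk J G = b * (((p:ℕ):S)^n * ((p:ℕ):S)) := by
          simp [hG, hmkΦ, hB]; ring
        rw [hψ2p, hψ2mk, hmkG]
        have e : (((p:ℕ):S))^(n+m+1) = ((p:ℕ):S)^m * (((p:ℕ):S)^n * ((p:ℕ):S)) := by ring
        rw [e, map_mul, ← mul_assoc, hb, ← map_mul]
    · intro x y hxy
      obtain ⟨GX, rfl⟩ := Ideal.Quotient.mk_surjective x
      obtain ⟨HX, rfl⟩ := Ideal.Quotient.mk_surjective y
      rw [halg] at hxy
      have h1 : ψ1 (Ideal.Quotient.mk I GX) = ψ1 (Ideal.Quotient.mk I HX) :=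
        congrArg Prod.fst hxy
      have h2 : ψ2 (Ideal.Quotient.mk I GX) = ψ2 (Ideal.Quotient.mk I HX) :=
        congrArg Prod.snd hxy
      rw [hψ1mk, hψ1mk] at h1
      rw [hψ2mk, hψ2mk] at h2
      have heval : eval 1 GX = eval 1 HX := by
        obtain ⟨⟨c, k, rfl⟩, hc⟩ :=
          IsLocalization.exists_of_eq (M := Submonoid.powers (p:ℤ)) (S := L1) h1
        dsimp only at hc
        have hpk : ((p:ℤ))^k ≠ 0 := pow_ne_zero _ (by exact_mod_cast hp.ne_zero)
        exact mul_left_cancel₀ hpk hc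
      have h2' : ∃ k : ℕ, Φ ∣ (p:ℤ[X])^k * (GX - HX) := by
        obtain ⟨⟨c, k, rfl⟩, hc⟩ :=
          IsLocalization.exists_of_eq (M := Submonoid.powers ((p:ℕ):S)) (S := L2) h2
        dsimp only at hc
        refine ⟨k, ?_⟩
        have h0 : Ideal.Quotient.mk J ((p:ℤ[X])^k * (GX - HX)) = 0 := by
          rw [map_mul, map_sub, map_pow, map_natCast, mul_sub, sub_eq_zero]
          exact hc
        rwa [Ideal.Quotient.eq_zero_iff_mem, hJ, Ideal.mem_span_singleton] at h0
      obtain ⟨k, H, hH⟩ := h2'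
      have hd1 : ∃ D : ℤ[X], GX - HX = (X - 1) * D := by
        have h : (X - C (1:ℤ)) ∣ GX - HX := by
          rw [dvd_iff_isRoot]
          simp [IsRoot, heval]
        obtain ⟨D, hD⟩ := h
        exact ⟨D, by rw [hD, map_one]⟩
      obtain ⟨D, hD⟩ := hd1
      obtain ⟨W, hWeq⟩ := hW
      refine ⟨⟨((p:ℕ):R)^(k+1), k+1, rfl⟩, ?_⟩
      dsimp only
      have hmem : Ideal.Quotient.mk I (((p:ℤ[X]))^(k+1) * (GX - HX)) = 0 := by
        rw [Ideal.Quotient.eq_zero_iff_mem, hI, Ideal.mem_span_singleton]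
        refine ⟨(p:ℤ[X])^k * D - W * H, ?_⟩
        have hPW : (p:ℤ[X]) = Φ - (X - 1) * W := by
          have hc : C ((p:ℕ):ℤ) = ((p:ℕ):ℤ[X]) := map_natCast C p
          rw [hWeq, hc]; ring
        calc (p:ℤ[X])^(k+1) * (GX - HX)
            = ((p:ℤ[X])^k * (GX - HX)) * (p:ℤ[X]) := by ring
          _ = ((p:ℤ[X])^k * (GX - HX)) * Φ - ((p:ℤ[X])^k * (GX - HX)) * ((X - 1) * W) := by
              rw [hPW]; ring
          _ = (p:ℤ[X])^k * ((X-1) * D) * Φ - Φ * H * ((X - 1) * W) := by rw [← hD, hH]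
          _ = ((X-1) * Φ) * ((p:ℤ[X])^k * D) - ((X-1)*Φ) * (W * H) := by ring
          _ = (X^p - 1) * ((p:ℤ[X])^k * D - W * H) := by rw [key]; ring
      have hcast : ∀ Q : ℤ[X],
          Ideal.Quotient.mk I ((p:ℤ[X])^(k+1) * Q) = ((p:ℕ):R)^(k+1) * Ideal.Quotient.mk I Q := by
        intro Q
        rw [map_mul, map_pow, map_natCast]
      rw [← hcast, ← hcast, ← sub_eq_zero, ← map_sub, ← mul_sub]
      exact hmem
  exact ⟨(IsLocalization.algEquiv (Submonoid.powers ((p:ℕ):R)) (Localization.Away ((p:ℕ):R))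
    (L1 × L2)).toRingEquiv⟩
end

section
/- Let p be a prime number. The images in ℤ[X]/(X^p − 1) of the ideals (X − 1) and (Φ_p) of ℤ[X] are prime ideals, and the set of minimal prime ideals of the ring ℤ[X]/(X^p − 1) is exactly { image of (X − 1), image of (Φ_p) }. In particular, the prime spectrum of ℤ[X]/(X^p − 1) has exactly two irreducible components. -/
open Polynomial

set_option maxHeartbeats 1000000

/-- For a prime `p`, the images in `ℤ[X]/(X^p − 1)` of the ideals `(X − 1)`
and `(Φ_p)` are prime, the set of minimal primes of `ℤ[X]/(X^p − 1)` is exactly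
`{image of (X − 1), image of (Φ_p)}`, and the prime spectrum has exactly two
irreducible components. -/
theorem minimalPrimes_quotient_X_pow_p_sub_one (p : ℕ) (hp : p.Prime) :
    (Ideal.map (Ideal.Quotient.mk (Ideal.span {(X : Polynomial ℤ) ^ p - 1}))
        (Ideal.span {(X : Polynomial ℤ) - 1})).IsPrime ∧
    (Ideal.map (Ideal.Quotient.mk (Ideal.span {(X : Polynomial ℤ) ^ p - 1}))
        (Ideal.span {cyclotomic p ℤ})).IsPrime ∧
    minimalPrimes (Polynomial ℤ ⧸ Ideal.span {(X : Polynomial ℤ) ^ p - 1}) =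
      {Ideal.map (Ideal.Quotient.mk (Ideal.span {(X : Polynomial ℤ) ^ p - 1}))
          (Ideal.span {(X : Polynomial ℤ) - 1}),
        Ideal.map (Ideal.Quotient.mk (Ideal.span {(X : Polynomial ℤ) ^ p - 1}))
          (Ideal.span {cyclotomic p ℤ})} ∧
    (irreducibleComponents
        (PrimeSpectrum (Polynomial ℤ ⧸ Ideal.span {(X : Polynomial ℤ) ^ p - 1}))).ncard = 2 := by
  haveI : Fact p.Prime := ⟨hp⟩
  set f : Polynomial ℤ := X - 1 with hf_def
  set g : Polynomial ℤ := cyclotomic p ℤ with hg_def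
  set I : Ideal (Polynomial ℤ) := Ideal.span {(X : Polynomial ℤ) ^ p - 1} with hI_def
  have hfg : g * f = (X : Polynomial ℤ) ^ p - 1 := cyclotomic_prime_mul_X_sub_one ℤ p
  -- primality of the generators
  have hfprime : Prime f := by
    have : f = X - C (1 : ℤ) := by simp [hf_def]
    rw [this]; exact prime_X_sub_C 1
  have hgirr : Irreducible g := cyclotomic.irreducible hp.pos
  have hgprime : Prime g := UniqueFactorizationMonoid.irreducible_iff_prime.mp hgirr
  -- f does not divide g
  have hnd : ¬ f ∣ g := by
    rintro ⟨c, hc⟩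
    have h1 : eval 1 g = (p : ℤ) := eval_one_cyclotomic_prime
    have h2 : eval 1 f = 0 := by simp [hf_def]
    have : (p : ℤ) = 0 := by
      rw [← h1, hc, eval_mul, h2, zero_mul]
    exact_mod_cast hp.ne_zero (by exact_mod_cast this)
  have hnd2 : ¬ g ∣ f := fun h =>
    hnd ((hgirr.associated_of_dvd hfprime.irreducible h).symm.dvd)
  have hne : Ideal.span {f} ≠ Ideal.span {g} := by
    intro h
    exact hnd (Ideal.mem_span_singleton.mp (h ▸ Ideal.mem_span_singleton_self g))
  -- I is contained in each of the two span ideals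
  have hIf : I ≤ Ideal.span {f} :=
    Ideal.span_singleton_le_span_singleton.mpr ⟨g, by rw [← hfg, mul_comm]⟩
  have hIg : I ≤ Ideal.span {g} :=
    Ideal.span_singleton_le_span_singleton.mpr ⟨f, hfg.symm⟩
  haveI hfsp : (Ideal.span {f}).IsPrime :=
    (Ideal.span_singleton_prime hfprime.ne_zero).mpr hfprime
  haveI hgsp : (Ideal.span {g}).IsPrime :=
    (Ideal.span_singleton_prime hgprime.ne_zero).mpr hgprime
  have hker : RingHom.ker (Ideal.Quotient.mk I) = I := Ideal.mk_ker
  -- images are prime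
  have h1 : (Ideal.map (Ideal.Quotient.mk I) (Ideal.span {f})).IsPrime :=
    Ideal.map_isPrime_of_surjective Ideal.Quotient.mk_surjective (hker.le.trans hIf)
  have h2 : (Ideal.map (Ideal.Quotient.mk I) (Ideal.span {g})).IsPrime :=
    Ideal.map_isPrime_of_surjective Ideal.Quotient.mk_surjective (hker.le.trans hIg)
  -- comap of the mapped ideals recovers the originals
  have hcm : ∀ J : Ideal (Polynomial ℤ), I ≤ J →
      Ideal.comap (Ideal.Quotient.mk I) (Ideal.map (Ideal.Quotient.mk I) J) = J := by
    intro J hJ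
    rw [Ideal.comap_map_of_surjective _ Ideal.Quotient.mk_surjective,
      ← RingHom.ker_eq_comap_bot, hker, sup_eq_left.mpr hJ]
  -- minimal primes over I in ℤ[X]
  have hmin : I.minimalPrimes = {Ideal.span {f}, Ideal.span {g}} := by
    ext Q
    constructor
    · rintro ⟨⟨hQp, hQle⟩, hQmin⟩
      have hmem : g * f ∈ Q := by
        rw [hfg]; exact hQle (Ideal.mem_span_singleton_self _)
      rcases hQp.mem_or_mem hmem with h | h
      · right
        have hle : Ideal.span {g} ≤ Q := (Ideal.span_singleton_le_iff_mem _).mpr h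
        exact le_antisymm (hQmin ⟨hgsp, hIg⟩ hle) hle
      · left
        have hle : Ideal.span {f} ≤ Q := (Ideal.span_singleton_le_iff_mem _).mpr h
        exact le_antisymm (hQmin ⟨hfsp, hIf⟩ hle) hle
    · rintro (rfl | rfl)
      · refine ⟨⟨hfsp, hIf⟩, ?_⟩
        rintro K ⟨hKp, hKle⟩ hKf
        have hmem : g * f ∈ K := by
          rw [hfg]; exact hKle (Ideal.mem_span_singleton_self _)
        rcases hKp.mem_or_mem hmem with h | h
        · exact absurd (Ideal.mem_span_singleton.mp (hKf h)) hnd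
        · exact (Ideal.span_singleton_le_iff_mem _).mpr h
      · refine ⟨⟨hgsp, hIg⟩, ?_⟩
        rintro K ⟨hKp, hKle⟩ hKg
        have hmem : g * f ∈ K := by
          rw [hfg]; exact hKle (Ideal.mem_span_singleton_self _)
        rcases hKp.mem_or_mem hmem with h | h
        · exact (Ideal.span_singleton_le_iff_mem _).mpr h
        · exact absurd (Ideal.mem_span_singleton.mp (hKg h)) hnd2
  -- transfer to the quotient
  have hinj : Function.Injective (Ideal.comap (Ideal.Quotient.mk I)) :=
    Ideal.comap_injective_of_surjective _ Ideal.Quotient.mk_surjective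
  have hquot : minimalPrimes (Polynomial ℤ ⧸ I) =
      {Ideal.map (Ideal.Quotient.mk I) (Ideal.span {f}),
        Ideal.map (Ideal.Quotient.mk I) (Ideal.span {g})} := by
    apply Set.image_injective.mpr hinj
    rw [← Ideal.minimalPrimes_eq_comap, hmin, Set.image_pair, hcm _ hIf, hcm _ hIg]
  have hmapne : Ideal.map (Ideal.Quotient.mk I) (Ideal.span {f}) ≠
      Ideal.map (Ideal.Quotient.mk I) (Ideal.span {g}) := by
    intro h
    apply hne
    rw [← hcm _ hIf, ← hcm _ hIg, h]
  refine ⟨h1, h2, hquot, ?_⟩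
  rw [← PrimeSpectrum.zeroLocus_minimalPrimes, hquot, Set.image_pair]
  apply Set.ncard_pair
  intro h
  apply hmapne
  have := congrArg PrimeSpectrum.vanishingIdeal h
  simpa only [Function.comp_apply, PrimeSpectrum.vanishingIdeal_zeroLocus_eq_radical,
    h1.radical, h2.radical] using this
end

section
/- Let p be a prime number, and let ψ : PrimeSpectrum ℤ → PrimeSpectrum(ℤ[X]/(X^p − 1)) and φ : PrimeSpectrum(ℤ[X]/(Φ_p)) → PrimeSpectrum(ℤ[X]/(X^p − 1)) be the maps induced by the quotient homomorphisms X ↦ 1 and the canonical surjection, respectively. Then the intersection of the images of ψ and φ consists of exactly one point, namely the maximal ideal of ℤ[X]/(X^p − 1) that is the image of the ideal (p, X − 1) ⊂ ℤ[X]. -/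
open Polynomial

/-- For a prime `p`, the images of the maps `ψ : Spec ℤ → Spec ℤ[X]/(X^p − 1)`
and `φ : Spec ℤ[X]/(Φ_p) → Spec ℤ[X]/(X^p − 1)` intersect in exactly one point, namely the
maximal ideal which is the image of `(p, X − 1) ⊂ ℤ[X]`. -/
theorem comap_images_intersection (p : ℕ) (hp : p.Prime)
    (f : (Polynomial ℤ ⧸ Ideal.span {(X : Polynomial ℤ) ^ p - 1}) →+* ℤ)
    (hf : f.comp (Ideal.Quotient.mk (Ideal.span {(X : Polynomial ℤ) ^ p - 1})) =
      Polynomial.evalRingHom (1 : ℤ))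
    (g : (Polynomial ℤ ⧸ Ideal.span {(X : Polynomial ℤ) ^ p - 1}) →+*
      Polynomial ℤ ⧸ Ideal.span {cyclotomic p ℤ})
    (hg : g.comp (Ideal.Quotient.mk (Ideal.span {(X : Polynomial ℤ) ^ p - 1})) =
      Ideal.Quotient.mk (Ideal.span {cyclotomic p ℤ})) :
    (Ideal.map (Ideal.Quotient.mk (Ideal.span {(X : Polynomial ℤ) ^ p - 1}))
        (Ideal.span {(p : Polynomial ℤ), X - 1})).IsMaximal ∧
    Set.range (PrimeSpectrum.comap f) ∩ Set.range (PrimeSpectrum.comap g) =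
      {P : PrimeSpectrum (Polynomial ℤ ⧸ Ideal.span {(X : Polynomial ℤ) ^ p - 1}) |
        P.asIdeal =
          Ideal.map (Ideal.Quotient.mk (Ideal.span {(X : Polynomial ℤ) ^ p - 1}))
            (Ideal.span {(p : Polynomial ℤ), X - 1})} := by
  haveI : Fact p.Prime := ⟨hp⟩
  set mk := Ideal.Quotient.mk (Ideal.span {(X : Polynomial ℤ) ^ p - 1}) with hmk
  set K : Ideal (Polynomial ℤ) := Ideal.span {(p : Polynomial ℤ), X - 1} with hK
  have hmk_surj : Function.Surjective mk := Ideal.Quotient.mk_surjective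
  -- h : R → ZMod p
  set h : (Polynomial ℤ ⧸ Ideal.span {(X : Polynomial ℤ) ^ p - 1}) →+* ZMod p :=
    (Int.castRingHom (ZMod p)).comp f with hh
  have hf_surj : Function.Surjective f := by
    intro n
    exact ⟨mk (C n), by
      have := congrArg (fun φ => φ (C n)) hf
      simpa using this⟩
  have hg_surj : Function.Surjective g := by
    intro y
    obtain ⟨q, rfl⟩ := Ideal.Quotient.mk_surjective y
    exact ⟨mk q, by have := congrArg (fun φ => φ q) hg; simpa using this⟩
  have hh_surj : Function.Surjective h :=
    (ZMod.intCast_surjective).comp hf_surj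
  -- kernel of h ∘ mk is K
  have hker_hmk : RingHom.ker (h.comp mk) = K := by
    ext q
    have hval : (h.comp mk) q = ((q.eval 1 : ℤ) : ZMod p) := by
      have : h.comp mk = (Int.castRingHom (ZMod p)).comp (f.comp mk) := by
        rw [hh, RingHom.comp_assoc]
      rw [this, hf]
      simp
    rw [RingHom.mem_ker, hval, ZMod.intCast_zmod_eq_zero_iff_dvd, hK,
      Ideal.mem_span_pair]
    constructor
    · rintro ⟨k, hk⟩
      obtain ⟨r, hr⟩ := X_sub_C_dvd_sub_C_eval (a := (1 : ℤ)) (p := q)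
      refine ⟨C k, r, ?_⟩
      have : q = C (q.eval 1) + (X - C 1) * r := by rw [← hr]; ring
      rw [this, hk]
      simp only [map_mul, map_natCast, map_one]
      ring
    · rintro ⟨u, v, huv⟩
      refine ⟨u.eval 1, ?_⟩
      rw [← huv]
      simp [mul_comm]
  have hMker : Ideal.map mk K = RingHom.ker h := by
    have h1 : RingHom.ker h = Ideal.map mk (Ideal.comap mk (RingHom.ker h)) :=
      (Ideal.map_comap_of_surjective mk hmk_surj _).symm
    rw [h1, RingHom.comap_ker, hker_hmk]
  have hMmax : (Ideal.map mk K).IsMaximal := by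
    rw [hMker]; exact RingHom.ker_isMaximal_of_surjective h hh_surj
  refine ⟨hMmax, ?_⟩
  -- kernels of f and g
  have hkerf : RingHom.ker f = Ideal.map mk (Ideal.span {(X : Polynomial ℤ) - 1}) := by
    have h1 : RingHom.ker f = Ideal.map mk (Ideal.comap mk (RingHom.ker f)) :=
      (Ideal.map_comap_of_surjective mk hmk_surj _).symm
    rw [h1, RingHom.comap_ker, hf]
    congr 1
    ext q
    rw [RingHom.mem_ker, Ideal.mem_span_singleton]
    constructor
    · intro hq
      have := dvd_iff_isRoot (p := q) (a := (1 : ℤ))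
      simp only [map_one] at this
      exact this.mpr (by simpa [IsRoot] using hq)
    · intro hq
      obtain ⟨r, hr⟩ := hq
      simp [hr]
  have hkerg : RingHom.ker g = Ideal.map mk (Ideal.span {cyclotomic p ℤ}) := by
    have h1 : RingHom.ker g = Ideal.map mk (Ideal.comap mk (RingHom.ker g)) :=
      (Ideal.map_comap_of_surjective mk hmk_surj _).symm
    rw [h1, RingHom.comap_ker, hg, Ideal.mk_ker]
  -- sup of kernels
  have hsup : RingHom.ker f ⊔ RingHom.ker g = Ideal.map mk K := by
    rw [hkerf, hkerg, ← Ideal.map_sup]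
    congr 1
    have hcp : (X : Polynomial ℤ) - 1 = X - C 1 := by simp
    obtain ⟨r, hr⟩ := X_sub_C_dvd_sub_C_eval (a := (1 : ℤ)) (p := cyclotomic p ℤ)
    have heval : (cyclotomic p ℤ).eval 1 = (p : ℤ) := eval_one_cyclotomic_prime
    have hCp : (C ((p : ℕ) : ℤ) : Polynomial ℤ) = (p : Polynomial ℤ) := map_natCast C p
    apply le_antisymm
    · rw [sup_le_iff]
      constructor
      · rw [Ideal.span_le]
        intro x hx
        simp only [Set.mem_singleton_iff] at hx
        subst hx
        exact Ideal.subset_span (Set.mem_insert_of_mem _ rfl)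
      · rw [Ideal.span_le]
        intro x hx
        simp only [Set.mem_singleton_iff] at hx
        subst hx
        have : cyclotomic p ℤ = (p : Polynomial ℤ) + (X - 1) * r := by
          rw [← hCp, ← heval, hcp, ← hr]; ring
        rw [this]
        exact Ideal.add_mem _ (Ideal.subset_span (Set.mem_insert _ _))
          (Ideal.mul_mem_right _ _ (Ideal.subset_span (Set.mem_insert_of_mem _ rfl)))
    · rw [Ideal.span_le]
      rintro x hx
      simp only [Set.mem_insert_iff, Set.mem_singleton_iff] at hx
      rcases hx with rfl | rfl
      · have : (p : Polynomial ℤ) = cyclotomic p ℤ - (X - 1) * r := by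
          rw [← hCp, ← heval, hcp, ← hr]; ring
        rw [this]
        exact Ideal.sub_mem _
          (Ideal.mem_sup_right (Ideal.subset_span rfl))
          (Ideal.mem_sup_left (Ideal.mul_mem_right _ _ (Ideal.subset_span rfl)))
      · exact Ideal.mem_sup_left (Ideal.subset_span rfl)
  -- put it together
  rw [range_comap_of_surjective _ f hf_surj,
    range_comap_of_surjective _ g hg_surj,
    ← PrimeSpectrum.zeroLocus_sup, hsup]
  ext P
  simp only [PrimeSpectrum.mem_zeroLocus, Set.mem_setOf_eq, SetLike.coe_subset_coe]
  constructor
  · intro hle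
    exact (hMmax.eq_of_le P.isPrime.ne_top hle).symm
  · intro heq
    rw [heq]
end

section
/- Let p be a prime number. There is a bijection of sets PrimeSpectrum(ℤ[X]/(X^p − 1)) ≃ PrimeSpectrum ℤ ⊕ PrimeSpectrum((ℤ[X]/(Φ_p))[1/p]), where (ℤ[X]/(Φ_p))[1/p] denotes the localization of ℤ[X]/(Φ_p) away from p; on the first summand the bijection is induced by the quotient map X ↦ 1 and on the second by the composite of the localization map with the canonical surjection. -/
open Polynomial

set_option maxHeartbeats 1000000
set_option synthInstance.maxHeartbeats 1000000

/-- For a prime `p`, there is a bijection of sets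
`Spec(ℤ[X]/(X^p − 1)) ≃ Spec ℤ ⊔ Spec((ℤ[X]/(Φ_p))[1/p])`, induced on the first summand
by the quotient map `X ↦ 1` and on the second by the composite of the localization map
with the canonical surjection. -/
theorem primeSpectrum_decomposition (p : ℕ) (hp : p.Prime)
    (f : (Polynomial ℤ ⧸ Ideal.span {(X : Polynomial ℤ) ^ p - 1}) →+* ℤ)
    (hf : f.comp (Ideal.Quotient.mk (Ideal.span {(X : Polynomial ℤ) ^ p - 1})) =
      Polynomial.evalRingHom (1 : ℤ))
    (g : (Polynomial ℤ ⧸ Ideal.span {(X : Polynomial ℤ) ^ p - 1}) →+*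
      Polynomial ℤ ⧸ Ideal.span {cyclotomic p ℤ})
    (hg : g.comp (Ideal.Quotient.mk (Ideal.span {(X : Polynomial ℤ) ^ p - 1})) =
      Ideal.Quotient.mk (Ideal.span {cyclotomic p ℤ})) :
    ∃ e : PrimeSpectrum (Polynomial ℤ ⧸ Ideal.span {(X : Polynomial ℤ) ^ p - 1}) ≃
        (PrimeSpectrum ℤ ⊕
          PrimeSpectrum
            (Localization.Away ((p : ℕ) : Polynomial ℤ ⧸ Ideal.span {cyclotomic p ℤ}))),
      (∀ Q : PrimeSpectrum ℤ, e.symm (Sum.inl Q) = PrimeSpectrum.comap f Q) ∧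
      (∀ Q : PrimeSpectrum
          (Localization.Away ((p : ℕ) : Polynomial ℤ ⧸ Ideal.span {cyclotomic p ℤ})),
        e.symm (Sum.inr Q) =
          PrimeSpectrum.comap
            ((algebraMap (Polynomial ℤ ⧸ Ideal.span {cyclotomic p ℤ})
              (Localization.Away
                ((p : ℕ) : Polynomial ℤ ⧸ Ideal.span {cyclotomic p ℤ}))).comp g) Q) := by
  haveI : Fact p.Prime := ⟨hp⟩
  have hfeval : ∀ q : Polynomial ℤ,
      f (Ideal.Quotient.mk (Ideal.span {(X : Polynomial ℤ) ^ p - 1}) q) = q.eval 1 := by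
    intro q
    have := congrArg (fun h : _ →+* ℤ => h q) hf
    simpa using this
  have hgmk : ∀ q : Polynomial ℤ,
      g (Ideal.Quotient.mk (Ideal.span {(X : Polynomial ℤ) ^ p - 1}) q) = Ideal.Quotient.mk (Ideal.span {cyclotomic p ℤ}) q := by
    intro q
    have := congrArg (fun h : _ →+* ((Polynomial ℤ ⧸ Ideal.span {cyclotomic p ℤ})) => h q) hg
    simpa using this
  have fsurj : Function.Surjective f := by
    intro z
    exact ⟨Ideal.Quotient.mk _ (C z), by simp [hfeval]⟩
  have gsurj : Function.Surjective g := by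
    intro z
    obtain ⟨q, rfl⟩ := Ideal.Quotient.mk_surjective z
    exact ⟨Ideal.Quotient.mk _ q, hgmk q⟩
  have hmul : cyclotomic p ℤ * (X - 1) = X ^ p - 1 :=
    cyclotomic_prime_mul_X_sub_one ℤ p
  have hXp : Ideal.Quotient.mk (Ideal.span {(X : Polynomial ℤ) ^ p - 1}) ((X : Polynomial ℤ) ^ p - 1) = 0 :=
    Ideal.Quotient.eq_zero_iff_mem.mpr (Ideal.subset_span rfl)
  have hcycJ : Ideal.Quotient.mk (Ideal.span {cyclotomic p ℤ}) (cyclotomic p ℤ) = 0 :=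
    Ideal.Quotient.eq_zero_iff_mem.mpr (Ideal.subset_span rfl)
  have hC : (X - 1 : Polynomial ℤ) ∣ cyclotomic p ℤ - C (p : ℤ) := by
    have h1 : (X - C (1 : ℤ)) ∣ cyclotomic p ℤ - C (p : ℤ) := by
      rw [dvd_iff_isRoot]
      simp [IsRoot, eval_one_cyclotomic_prime]
    simpa using h1
  have hpd : (C (p : ℤ)) ∣ ((X - 1 : Polynomial ℤ) ^ p - (X ^ p - 1)) := by
    rw [C_dvd_iff_dvd_coeff]
    intro i
    have hmap : ((X - 1 : Polynomial ℤ) ^ p - (X ^ p - 1)).map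
        (Int.castRingHom (ZMod p)) = 0 := by
      simp only [Polynomial.map_sub, Polynomial.map_pow, Polynomial.map_one, map_X]
      rw [sub_pow_char]
      ring
    have := congrArg (fun q => Polynomial.coeff q i) hmap
    simp only [coeff_map, coeff_zero] at this
    exact_mod_cast (ZMod.intCast_zmod_eq_zero_iff_dvd _ p).mp this
  have hCnat : (C ((p : ℕ) : ℤ) : Polynomial ℤ) = ((p : ℕ) : Polynomial ℤ) := by
    simp
  have hpR : Ideal.Quotient.mk (Ideal.span {(X : Polynomial ℤ) ^ p - 1}) (C (p : ℤ)) = ((p : ℕ) : (Polynomial ℤ ⧸ Ideal.span {(X : Polynomial ℤ) ^ p - 1})) := by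
    rw [hCnat, map_natCast]
  have hpS : Ideal.Quotient.mk (Ideal.span {cyclotomic p ℤ}) (C (p : ℤ)) = ((p : ℕ) : (Polynomial ℤ ⧸ Ideal.span {cyclotomic p ℤ})) := by
    rw [hCnat, map_natCast]
  have key1 : ∀ P : PrimeSpectrum ((Polynomial ℤ ⧸ Ideal.span {(X : Polynomial ℤ) ^ p - 1})), Ideal.Quotient.mk (Ideal.span {(X : Polynomial ℤ) ^ p - 1}) (X - 1) ∉ P.asIdeal →
      ((p : ℕ) : (Polynomial ℤ ⧸ Ideal.span {(X : Polynomial ℤ) ^ p - 1})) ∉ P.asIdeal := by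
    intro P hX hpP
    obtain ⟨c, hc⟩ := hpd
    have heq : (Ideal.Quotient.mk (Ideal.span {(X : Polynomial ℤ) ^ p - 1}) (X - 1)) ^ p = ((p : ℕ) : (Polynomial ℤ ⧸ Ideal.span {(X : Polynomial ℤ) ^ p - 1})) * Ideal.Quotient.mk (Ideal.span {(X : Polynomial ℤ) ^ p - 1}) c := by
      have h2 : ((X - 1 : Polynomial ℤ)) ^ p = (X ^ p - 1) + C (p : ℤ) * c := by
        rw [← hc]; ring
      calc (Ideal.Quotient.mk (Ideal.span {(X : Polynomial ℤ) ^ p - 1}) (X - 1)) ^ p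
          = Ideal.Quotient.mk (Ideal.span {(X : Polynomial ℤ) ^ p - 1}) ((X - 1) ^ p) := by rw [map_pow]
        _ = Ideal.Quotient.mk (Ideal.span {(X : Polynomial ℤ) ^ p - 1}) ((X ^ p - 1) + C (p : ℤ) * c) := by rw [← h2]
        _ = ((p : ℕ) : (Polynomial ℤ ⧸ Ideal.span {(X : Polynomial ℤ) ^ p - 1})) * Ideal.Quotient.mk (Ideal.span {(X : Polynomial ℤ) ^ p - 1}) c := by
            rw [map_add, hXp, map_mul, hpR, zero_add]
    have hmem : (Ideal.Quotient.mk (Ideal.span {(X : Polynomial ℤ) ^ p - 1}) (X - 1)) ^ p ∈ P.asIdeal := by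
      rw [heq]; exact P.asIdeal.mul_mem_right _ hpP
    exact hX (P.isPrime.mem_of_pow_mem p hmem)
  have key2 : ∀ P : PrimeSpectrum ((Polynomial ℤ ⧸ Ideal.span {(X : Polynomial ℤ) ^ p - 1})), Ideal.Quotient.mk (Ideal.span {(X : Polynomial ℤ) ^ p - 1}) (X - 1) ∉ P.asIdeal →
      Ideal.Quotient.mk (Ideal.span {(X : Polynomial ℤ) ^ p - 1}) (cyclotomic p ℤ) ∈ P.asIdeal := by
    intro P hX
    have h0 : Ideal.Quotient.mk (Ideal.span {(X : Polynomial ℤ) ^ p - 1}) (cyclotomic p ℤ) * Ideal.Quotient.mk (Ideal.span {(X : Polynomial ℤ) ^ p - 1}) (X - 1) = 0 := by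
      rw [← map_mul, hmul, hXp]
    have := P.isPrime.mem_or_mem (h0 ▸ P.asIdeal.zero_mem)
    tauto
  have hleft : ∀ Q : PrimeSpectrum ℤ,
      Ideal.Quotient.mk (Ideal.span {(X : Polynomial ℤ) ^ p - 1}) (X - 1) ∈ (PrimeSpectrum.comap f Q).asIdeal := by
    intro Q
    show f (Ideal.Quotient.mk (Ideal.span {(X : Polynomial ℤ) ^ p - 1}) (X - 1)) ∈ Q.asIdeal
    rw [hfeval]
    simp
  have hright : ∀ Q : PrimeSpectrum ((Localization.Away ((p : ℕ) : Polynomial ℤ ⧸ Ideal.span {cyclotomic p ℤ}))),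
      Ideal.Quotient.mk (Ideal.span {(X : Polynomial ℤ) ^ p - 1}) (X - 1) ∉
        (PrimeSpectrum.comap ((algebraMap ((Polynomial ℤ ⧸ Ideal.span {cyclotomic p ℤ})) ((Localization.Away ((p : ℕ) : Polynomial ℤ ⧸ Ideal.span {cyclotomic p ℤ})))).comp g) Q).asIdeal := by
    intro Q hmem
    have hmem2 : algebraMap ((Polynomial ℤ ⧸ Ideal.span {cyclotomic p ℤ})) ((Localization.Away ((p : ℕ) : Polynomial ℤ ⧸ Ideal.span {cyclotomic p ℤ}))) (Ideal.Quotient.mk (Ideal.span {cyclotomic p ℤ}) (X - 1)) ∈ Q.asIdeal := by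
      have h3 : ((algebraMap ((Polynomial ℤ ⧸ Ideal.span {cyclotomic p ℤ})) ((Localization.Away ((p : ℕ) : Polynomial ℤ ⧸ Ideal.span {cyclotomic p ℤ})))).comp g) (Ideal.Quotient.mk (Ideal.span {(X : Polynomial ℤ) ^ p - 1}) (X - 1)) ∈ Q.asIdeal := hmem
      rwa [RingHom.comp_apply, hgmk] at h3
    obtain ⟨q, hq⟩ := hC
    have hprod : Ideal.Quotient.mk (Ideal.span {cyclotomic p ℤ}) (X - 1) * Ideal.Quotient.mk (Ideal.span {cyclotomic p ℤ}) (-q) = ((p : ℕ) : (Polynomial ℤ ⧸ Ideal.span {cyclotomic p ℤ})) := by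
      rw [← map_mul, show (X - 1 : Polynomial ℤ) * (-q) = C (p : ℤ) - cyclotomic p ℤ by
        linear_combination hq, map_sub, hcycJ, hpS, sub_zero]
    have hunit : IsUnit (algebraMap (Polynomial ℤ ⧸ Ideal.span {cyclotomic p ℤ}) (Localization.Away ((p : ℕ) : Polynomial ℤ ⧸ Ideal.span {cyclotomic p ℤ})) ((p : ℕ) : (Polynomial ℤ ⧸ Ideal.span {cyclotomic p ℤ}))) :=
      IsLocalization.Away.algebraMap_isUnit (S := (Localization.Away ((p : ℕ) : Polynomial ℤ ⧸ Ideal.span {cyclotomic p ℤ}))) (x := ((p : ℕ) : (Polynomial ℤ ⧸ Ideal.span {cyclotomic p ℤ})))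
    have h4 : algebraMap (Polynomial ℤ ⧸ Ideal.span {cyclotomic p ℤ}) (Localization.Away ((p : ℕ) : Polynomial ℤ ⧸ Ideal.span {cyclotomic p ℤ})) ((p : ℕ) : (Polynomial ℤ ⧸ Ideal.span {cyclotomic p ℤ})) ∈ Q.asIdeal := by
      have h5 := Q.asIdeal.mul_mem_right
        (algebraMap _ _ (Ideal.Quotient.mk (Ideal.span {cyclotomic p ℤ}) (-q))) hmem2
      rw [← map_mul, hprod] at h5
      exact h5
    exact Q.isPrime.ne_top (Q.asIdeal.eq_top_of_isUnit_mem h4 hunit)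
  let F : PrimeSpectrum ℤ ⊕ PrimeSpectrum ((Localization.Away ((p : ℕ) : Polynomial ℤ ⧸ Ideal.span {cyclotomic p ℤ}))) → PrimeSpectrum ((Polynomial ℤ ⧸ Ideal.span {(X : Polynomial ℤ) ^ p - 1})) :=
    Sum.elim (PrimeSpectrum.comap f)
      (PrimeSpectrum.comap ((algebraMap ((Polynomial ℤ ⧸ Ideal.span {cyclotomic p ℤ})) ((Localization.Away ((p : ℕ) : Polynomial ℤ ⧸ Ideal.span {cyclotomic p ℤ})))).comp g))
  have hinj : Function.Injective F := by
    have h1 : Function.Injective (PrimeSpectrum.comap f) :=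
      PrimeSpectrum.comap_injective_of_surjective f fsurj
    have h2 : Function.Injective
        (PrimeSpectrum.comap ((algebraMap ((Polynomial ℤ ⧸ Ideal.span {cyclotomic p ℤ})) ((Localization.Away ((p : ℕ) : Polynomial ℤ ⧸ Ideal.span {cyclotomic p ℤ})))).comp g)) := by
      rw [PrimeSpectrum.comap_comp]
      exact (PrimeSpectrum.comap_injective_of_surjective g gsurj).comp
        (PrimeSpectrum.localization_comap_injective ((Localization.Away ((p : ℕ) : Polynomial ℤ ⧸ Ideal.span {cyclotomic p ℤ})))
          (Submonoid.powers (((p : ℕ) : (Polynomial ℤ ⧸ Ideal.span {cyclotomic p ℤ})))))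
    rintro (a | a) (b | b) h
    · exact congrArg Sum.inl (h1 h)
    · have h' : PrimeSpectrum.comap f a
          = PrimeSpectrum.comap ((algebraMap ((Polynomial ℤ ⧸ Ideal.span {cyclotomic p ℤ})) ((Localization.Away ((p : ℕ) : Polynomial ℤ ⧸ Ideal.span {cyclotomic p ℤ})))).comp g) b := h
      exact absurd (h' ▸ hleft a) (hright b)
    · have h' : PrimeSpectrum.comap f b
          = PrimeSpectrum.comap ((algebraMap ((Polynomial ℤ ⧸ Ideal.span {cyclotomic p ℤ})) ((Localization.Away ((p : ℕ) : Polynomial ℤ ⧸ Ideal.span {cyclotomic p ℤ})))).comp g) a := h.symm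
      exact absurd (h' ▸ hleft b) (hright a)
    · exact congrArg Sum.inr (h2 h)
  have hsurj : Function.Surjective F := by
    intro P
    by_cases hX : Ideal.Quotient.mk (Ideal.span {(X : Polynomial ℤ) ^ p - 1}) (X - 1) ∈ P.asIdeal
    · have hker : (RingHom.ker f : Set ((Polynomial ℤ ⧸ Ideal.span {(X : Polynomial ℤ) ^ p - 1}))) ⊆ P.asIdeal := by
        intro y hy
        obtain ⟨q, rfl⟩ := Ideal.Quotient.mk_surjective y
        have h5 : q.eval 1 = 0 := by rw [← hfeval]; exact hy
        obtain ⟨r, hr⟩ := (dvd_iff_isRoot (a := (1 : ℤ))).mpr h5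
        have hr' : q = (X - 1) * r := by simpa using hr
        have h6 : Ideal.Quotient.mk (Ideal.span {(X : Polynomial ℤ) ^ p - 1}) q ∈ P.asIdeal := by
          rw [hr', map_mul]
          exact P.asIdeal.mul_mem_right _ hX
        exact h6
      have hrange : P ∈ Set.range (PrimeSpectrum.comap f) := by
        rw [range_comap_of_surjective _ f fsurj]
        exact hker
      obtain ⟨Q, hQ⟩ := hrange
      exact ⟨Sum.inl Q, hQ⟩
    · have hcy := key2 P hX
      have hp' := key1 P hX
      have hkerg : (RingHom.ker g : Set ((Polynomial ℤ ⧸ Ideal.span {(X : Polynomial ℤ) ^ p - 1}))) ⊆ P.asIdeal := by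
        intro y hy
        obtain ⟨q, rfl⟩ := Ideal.Quotient.mk_surjective y
        have h0 : Ideal.Quotient.mk (Ideal.span {cyclotomic p ℤ}) q = 0 := by rw [← hgmk]; exact hy
        obtain ⟨r, hr⟩ := Ideal.mem_span_singleton.mp
          (Ideal.Quotient.eq_zero_iff_mem.mp h0)
        have h7 : Ideal.Quotient.mk (Ideal.span {(X : Polynomial ℤ) ^ p - 1}) q ∈ P.asIdeal := by
          rw [hr, map_mul]
          exact P.asIdeal.mul_mem_right _ hcy
        exact h7
      have hrange : P ∈ Set.range (PrimeSpectrum.comap g) := by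
        rw [range_comap_of_surjective _ g gsurj]
        exact hkerg
      obtain ⟨Q', hQ'⟩ := hrange
      have hpQ' : (((p : ℕ) : (Polynomial ℤ ⧸ Ideal.span {cyclotomic p ℤ}))) ∉ Q'.asIdeal := by
        intro hmem
        apply hp'
        have h8 : g ((p : ℕ) : (Polynomial ℤ ⧸ Ideal.span {(X : Polynomial ℤ) ^ p - 1})) ∈ Q'.asIdeal := by rwa [map_natCast]
        rw [← hQ']
        exact h8
      have hrange2 : Q' ∈ Set.range (PrimeSpectrum.comap (algebraMap ((Polynomial ℤ ⧸ Ideal.span {cyclotomic p ℤ})) ((Localization.Away ((p : ℕ) : Polynomial ℤ ⧸ Ideal.span {cyclotomic p ℤ}))))) := by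
        rw [PrimeSpectrum.localization_away_comap_range ((Localization.Away ((p : ℕ) : Polynomial ℤ ⧸ Ideal.span {cyclotomic p ℤ}))) (((p : ℕ) : (Polynomial ℤ ⧸ Ideal.span {cyclotomic p ℤ})))]
        exact hpQ'
      obtain ⟨Q'', hQ''⟩ := hrange2
      refine ⟨Sum.inr Q'', ?_⟩
      show PrimeSpectrum.comap ((algebraMap ((Polynomial ℤ ⧸ Ideal.span {cyclotomic p ℤ})) ((Localization.Away ((p : ℕ) : Polynomial ℤ ⧸ Ideal.span {cyclotomic p ℤ})))).comp g) Q'' = P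
      rw [PrimeSpectrum.comap_comp_apply, hQ'', hQ']
  refine ⟨(Equiv.ofBijective F ⟨hinj, hsurj⟩).symm, fun Q => ?_, fun Q => ?_⟩
  · rw [Equiv.symm_symm]; rfl
  · rw [Equiv.symm_symm]; rfl
end

section
/- Let p be a prime number. The ring ℤ[X]/(Φ_p), where Φ_p is the p-th cyclotomic polynomial, is a Dedekind domain. -/
open Polynomial

theorem isIntegrallyClosed_of_ringEquiv {A B : Type*} [CommRing A] [CommRing B]
    [IsDomain A] [IsDomain B] (e : A ≃+* B) [IsIntegrallyClosed A] :
    IsIntegrallyClosed B := by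
  let F : FractionRing A ≃+* FractionRing B :=
    IsFractionRing.ringEquivOfRingEquiv e
  have hcomm : ∀ b : B, F.symm (algebraMap B (FractionRing B) b)
      = algebraMap A (FractionRing A) (e.symm b) := by
    intro b
    apply F.injective
    rw [F.apply_symm_apply, IsFractionRing.ringEquivOfRingEquiv_algebraMap,
      e.apply_symm_apply]
  rw [isIntegrallyClosed_iff (FractionRing B)]
  rintro x ⟨q, hqm, hq⟩
  have hint : IsIntegral A (F.symm x) := by
    refine ⟨q.map e.symm.toRingHom, hqm.map _, ?_⟩
    have hmaps : (algebraMap A (FractionRing A)).comp e.symm.toRingHom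
        = (F.symm : FractionRing B →+* FractionRing A).comp (algebraMap B (FractionRing B)) := by
      ext b
      simp [hcomm]
    rw [Polynomial.eval₂_map, hmaps]
    have hhe := Polynomial.hom_eval₂ q (algebraMap B (FractionRing B))
      (F.symm : FractionRing B →+* FractionRing A) x
    rw [hq, map_zero] at hhe
    exact hhe.symm
  obtain ⟨y, hy⟩ := IsIntegrallyClosed.isIntegral_iff.mp hint
  refine ⟨e y, ?_⟩
  have := congrArg F (hcomm (e y))
  rw [F.apply_symm_apply] at this
  rw [this, e.symm_apply_apply, hy, F.apply_symm_apply]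

theorem dimensionLEOne_of_ringEquiv {A B : Type*} [CommRing A] [CommRing B]
    (e : A ≃+* B) [Ring.DimensionLEOne A] : Ring.DimensionLEOne B where
  maximalOfPrime := by
    intro P hP hPprime
    have h1 : (P.comap (e : A →+* B)).IsPrime := hPprime.comap _
    have h2 : P.comap (e : A →+* B) ≠ ⊥ := by
      intro h
      apply hP
      rw [← Ideal.map_comap_of_surjective (e : A →+* B) e.surjective P, h,
        Ideal.map_bot]
    have h3 : (P.comap (e : A →+* B)).IsMaximal := Ring.DimensionLEOne.maximalOfPrime h2 h1
    have h4 : ((P.comap (e : A →+* B)).comap (e.symm : B →+* A)).IsMaximal :=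
      Ideal.comap_isMaximal_of_surjective _ e.symm.surjective
    have : (P.comap (e : A →+* B)).comap (e.symm : B →+* A) = P := by
      rw [Ideal.comap_comap]
      have : (e : A →+* B).comp (e.symm : B →+* A) = RingHom.id B := by
        ext b; simp
      rw [this, Ideal.comap_id]
    rwa [this] at h4

theorem isDedekindDomain_of_ringEquiv {A B : Type*} [CommRing A] [CommRing B]
    (e : A ≃+* B) [IsDedekindDomain A] : IsDedekindDomain B := by
  haveI hdom : IsDomain B := Function.Injective.isDomain (e.symm : B →+* A) e.symm.injective
  haveI hnoeth : IsNoetherianRing B := isNoetherianRing_of_ringEquiv A e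
  haveI hdim : Ring.DimensionLEOne B := dimensionLEOne_of_ringEquiv e
  haveI hic : IsIntegrallyClosed B := isIntegrallyClosed_of_ringEquiv e
  have hicl : IsIntegralClosure B B (FractionRing B) := inferInstance
  have hdr : IsDedekindRing B :=
    { toIsNoetherian := hnoeth, toDimensionLEOne := hdim, toIsIntegralClosure := hicl }
  exact { toIsDomain := hdom, toIsDedekindRing := hdr }

/-- For a prime `p`, the ring `ℤ[X]/(Φ_p)` is a Dedekind domain. -/
theorem quotient_cyclotomic_isDedekindDomain (p : ℕ) (hp : p.Prime) :
    IsDedekindDomain (Polynomial ℤ ⧸ Ideal.span {cyclotomic p ℤ}) := by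
  haveI : Fact p.Prime := ⟨hp⟩
  let pn : ℕ+ := ⟨p, hp.pos⟩
  haveI : Fact (Nat.Prime (pn : ℕ)) := ⟨hp⟩
  haveI : NeZero ((pn : ℕ) : ℚ) := ⟨by exact_mod_cast hp.ne_zero⟩
  let K := CyclotomicField pn ℚ
  haveI : IsCyclotomicExtension {(pn : ℕ)} ℚ K := CyclotomicField.isCyclotomicExtension (pn : ℕ) ℚ
  haveI : NumberField K := IsCyclotomicExtension.numberField {(pn : ℕ)} ℚ K
  have hζ := IsCyclotomicExtension.zeta_spec pn ℚ K
  let pb := hζ.integralPowerBasis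
  have hmin : minpoly ℤ pb.gen = cyclotomic p ℤ := by
    have h1 : pb.gen = hζ.toInteger := hζ.integralPowerBasis_gen
    have h2 : minpoly ℤ hζ.toInteger = minpoly ℤ (IsCyclotomicExtension.zeta pn ℚ K) :=
      (minpoly.algebraMap_eq NumberField.RingOfIntegers.coe_injective hζ.toInteger).symm
    have h3 : cyclotomic (pn : ℕ) ℤ = minpoly ℤ (IsCyclotomicExtension.zeta pn ℚ K) :=
      cyclotomic_eq_minpoly hζ pn.pos
    rw [h1, h2, ← h3]
    rfl
  have h2 : Polynomial.aeval pb.gen (cyclotomic p ℤ) = 0 := by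
    rw [← hmin]; exact minpoly.aeval _ _
  have h1 : Polynomial.aeval (AdjoinRoot.root (cyclotomic p ℤ)) (minpoly ℤ pb.gen) = 0 := by
    rw [hmin, AdjoinRoot.aeval_eq, AdjoinRoot.mk_self]
  let e : AdjoinRoot (cyclotomic p ℤ) ≃ₐ[ℤ] NumberField.RingOfIntegers K :=
    AdjoinRoot.equiv' _ pb h1 h2
  exact isDedekindDomain_of_ringEquiv e.symm.toRingEquiv
end

section
/- Let p be a prime number. The localization away from p of the ring ℤ[X]/(Φ_p) is a Dedekind domain; in particular it is a Noetherian ring. -/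
open Polynomial

set_option synthInstance.maxHeartbeats 1000000
set_option maxHeartbeats 1000000

/-- For a prime `p`, the localization away from `p` of `ℤ[X]/(Φ_p)` is a
Dedekind domain; in particular it is a Noetherian ring. -/
theorem localization_quotient_cyclotomic_isDedekindDomain (p : ℕ) (hp : p.Prime) :
    IsDedekindDomain
        (Localization.Away ((p : ℕ) : Polynomial ℤ ⧸ Ideal.span {cyclotomic p ℤ})) ∧
      IsNoetherianRing
        (Localization.Away ((p : ℕ) : Polynomial ℤ ⧸ Ideal.span {cyclotomic p ℤ})) := by
  haveI : Fact p.Prime := ⟨hp⟩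
  set R : Type := Polynomial ℤ ⧸ Ideal.span {cyclotomic p ℤ} with hR
  let q : ℕ+ := ⟨p, hp.pos⟩
  let K := CyclotomicField q ℚ
  haveI : NeZero (q : ℕ) := ⟨hp.ne_zero⟩
  haveI : IsCyclotomicExtension {(q : ℕ)} ℚ K :=
    haveI : NeZero ((q : ℕ) : ℚ) := ⟨by exact_mod_cast hp.ne_zero⟩
    CyclotomicField.isCyclotomicExtension (q : ℕ) ℚ
  let ζ : K := IsCyclotomicExtension.zeta q ℚ K
  have hζ : IsPrimitiveRoot ζ (q : ℕ) := IsCyclotomicExtension.zeta_spec q ℚ K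
  have hint : IsIntegral ℤ ζ := hζ.isIntegral q.pos
  have hmin : cyclotomic p ℤ = minpoly ℤ ζ := cyclotomic_eq_minpoly hζ hp.pos
  haveI : Fact (Nat.Prime (q : ℕ)) := ⟨hp⟩
  have e'' := minpoly.equivAdjoin hint
  rw [← hmin] at e''
  have e' : R ≃ₐ[ℤ] Algebra.adjoin ℤ ({ζ} : Set K) := e''
  haveI hIC : IsIntegralClosure (Algebra.adjoin ℤ ({ζ} : Set K)) ℤ K :=
    IsCyclotomicExtension.Rat.isIntegralClosure_adjoin_singleton_of_prime hζ
  -- transfer structures along `e'`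
  let f : R →ₐ[ℤ] K := (IsScalarTower.toAlgHom ℤ (Algebra.adjoin ℤ ({ζ} : Set K)) K).comp
    e'.toAlgHom
  letI : Algebra R K := f.toRingHom.toAlgebra
  have halg : ∀ r : R, algebraMap R K r = f r := fun r => rfl
  haveI : IsScalarTower ℤ R K := IsScalarTower.of_algebraMap_eq fun x => (f.commutes x).symm
  haveI : IsDomain R := MulEquiv.isDomain (Algebra.adjoin ℤ ({ζ} : Set K)) e'.toRingEquiv.toMulEquiv
  have hinj : Function.Injective (algebraMap R K) := by
    intro a b hab
    rw [halg, halg] at hab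
    exact e'.injective (Subtype.ext hab)
  haveI : IsIntegralClosure R ℤ K := by
    refine ⟨hinj, fun {x} => ⟨fun hx => ?_, fun ⟨y, hy⟩ => ?_⟩⟩
    · obtain ⟨y, hy⟩ := IsIntegralClosure.isIntegral_iff
        (R := ℤ) (A := Algebra.adjoin ℤ ({ζ} : Set K)) (B := K) |>.mp hx
      exact ⟨e'.symm y, by rw [halg]; simp [f, hy]⟩
    · refine IsIntegralClosure.isIntegral_iff
        (A := Algebra.adjoin ℤ ({ζ} : Set K)) (R := ℤ) (B := K) |>.mpr ⟨e' y, ?_⟩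
      rw [← hy, halg]; rfl
  haveI : NumberField K := IsCyclotomicExtension.numberField {(q : ℕ)} ℚ K
  haveI hDD : IsDedekindDomain R := IsIntegralClosure.isDedekindDomain ℤ ℚ K R
  have hpne : ((p : ℕ) : R) ≠ 0 := by
    intro h
    have h0 : ((p : ℕ) : K) = 0 := by
      rw [← map_natCast (algebraMap R K) p, h, map_zero]
    exact hp.ne_zero (Nat.cast_eq_zero.mp h0)
  have hM : Submonoid.powers ((p : ℕ) : R) ≤ nonZeroDivisors R :=
    powers_le_nonZeroDivisors_of_noZeroDivisors hpne
  haveI : IsDomain (Localization.Away ((p : ℕ) : R)) :=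
    IsLocalization.isDomain_localization hM
  haveI h1 : IsDedekindDomain (Localization.Away ((p : ℕ) : R)) :=
    IsLocalization.isDedekindDomain R hM _
  exact ⟨h1, h1.toIsNoetherian⟩
end

section
/- Let R be a commutative ring and consider the Laurent polynomial ring R[T, T⁻¹] with its natural ℤ-grading by T-degree (i.e. the grading of the monoid algebra R[ℤ]). Then extension of ideals along the inclusion R → R[T, T⁻¹] gives a bijection between the prime ideals of R and the homogeneous prime ideals of R[T, T⁻¹]; the inverse is contraction (intersection with the degree-zero part R). In particular, every homogeneous prime ideal of R[T, T⁻¹] is generated by its degree-zero part. -/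
set_option maxHeartbeats 1000000

open AddMonoidAlgebra Finsupp

section LaurentAux

variable {R : Type*} [CommRing R]

private lemma laurent_algebraMap_eq (r : R) :
    algebraMap R (AddMonoidAlgebra R ℤ) r = AddMonoidAlgebra.single (0 : ℤ) r := by
  simp [AddMonoidAlgebra.coe_algebraMap]

private lemma laurent_algebraMap_eq' (r : R) :
    algebraMap R (AddMonoidAlgebra R ℤ) r = AddMonoidAlgebra.single (0 : ℤ) r :=
  laurent_algebraMap_eq r

/-- The ideal of Laurent polynomials all of whose coefficients lie in `P`. -/
private def coeffIdeal (P : Ideal R) : Ideal (AddMonoidAlgebra R ℤ) where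
  carrier := {x | ∀ n : ℤ, x.coeff n ∈ P}
  add_mem' := fun ha hb n => by
    simpa using P.add_mem (ha n) (hb n)
  zero_mem' := fun n => by simp [P.zero_mem]
  smul_mem' := fun c x hx n => by
    rw [smul_eq_mul, AddMonoidAlgebra.coeff_mul, Finsupp.sum]
    refine Ideal.sum_mem _ fun i _ => ?_
    rw [Finsupp.sum]
    refine Ideal.sum_mem _ fun j _ => ?_
    split_ifs
    · exact P.mul_mem_left _ (hx j)
    · exact P.zero_mem

private lemma mem_coeffIdeal {P : Ideal R} {x : AddMonoidAlgebra R ℤ} :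
    x ∈ coeffIdeal P ↔ ∀ n : ℤ, x.coeff n ∈ P := Iff.rfl

private lemma laurent_map_eq (P : Ideal R) :
    Ideal.map (algebraMap R (AddMonoidAlgebra R ℤ)) P = coeffIdeal P := by
  apply le_antisymm
  · rw [Ideal.map_le_iff_le_comap]
    intro r hr
    simp only [Ideal.mem_comap, mem_coeffIdeal, laurent_algebraMap_eq]
    intro n
    rw [AddMonoidAlgebra.coeff_single, Finsupp.single_apply]
    split_ifs
    · exact hr
    · exact P.zero_mem
  · intro x hx
    have hx2 : x = x.coeff.sum fun n r => AddMonoidAlgebra.single n r :=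
      (AddMonoidAlgebra.sum_coeff_single x).symm
    rw [hx2, Finsupp.sum]
    refine Ideal.sum_mem _ fun n _ => ?_
    have h5 := Ideal.mul_mem_left (Ideal.map (algebraMap R (AddMonoidAlgebra R ℤ)) P)
      (AddMonoidAlgebra.single n (1 : R)) (Ideal.mem_map_of_mem _ (hx n))
    rw [laurent_algebraMap_eq', AddMonoidAlgebra.single_mul_single, add_zero, one_mul] at h5
    exact h5

private lemma laurent_decompose_apply (x : AddMonoidAlgebra R ℤ) (i : ℤ) :
    (DirectSum.decompose (AddMonoidAlgebra.grade R (M := ℤ)) x i : AddMonoidAlgebra R ℤ)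
      = AddMonoidAlgebra.single i (x.coeff i) := by
  induction x using AddMonoidAlgebra.induction_linear with
  | zero => simp
  | add f g hf hg =>
    rw [DirectSum.decompose_add, DirectSum.add_apply, Submodule.coe_add, hf, hg,
      AddMonoidAlgebra.coeff_add, Finsupp.add_apply, AddMonoidAlgebra.single_add]
  | single m r =>
    rw [AddMonoidAlgebra.grade.decompose_single]
    by_cases h : m = i
    · subst h
      rw [DirectSum.of_eq_same, AddMonoidAlgebra.coeff_single, Finsupp.single_eq_same]
    · rw [DirectSum.of_eq_of_ne _ _ _ (Ne.symm h), AddMonoidAlgebra.coeff_single, Finsupp.single_eq_of_ne' h,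
        AddMonoidAlgebra.single_zero, Submodule.coe_zero]

private lemma laurent_map_isHomogeneous (P : Ideal R) :
    Ideal.IsHomogeneous (AddMonoidAlgebra.grade R (M := ℤ))
      (Ideal.map (algebraMap R (AddMonoidAlgebra R ℤ)) P) := by
  intro i x hx
  rw [laurent_map_eq, mem_coeffIdeal] at hx ⊢
  rw [laurent_decompose_apply]
  intro n
  rw [AddMonoidAlgebra.coeff_single, Finsupp.single_apply]
  split_ifs
  · exact hx i
  · exact P.zero_mem

private lemma laurent_comap_map (P : Ideal R) :
    Ideal.comap (algebraMap R (AddMonoidAlgebra R ℤ))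
      (Ideal.map (algebraMap R (AddMonoidAlgebra R ℤ)) P) = P := by
  ext r
  rw [Ideal.mem_comap, laurent_map_eq, mem_coeffIdeal]
  constructor
  · intro h
    have := h 0
    rwa [laurent_algebraMap_eq, AddMonoidAlgebra.coeff_single, Finsupp.single_eq_same] at this
  · intro hr n
    rw [laurent_algebraMap_eq, AddMonoidAlgebra.coeff_single, Finsupp.single_apply]
    split_ifs
    · exact hr
    · exact P.zero_mem

private lemma laurent_map_isPrime (P : Ideal R) (hP : P.IsPrime) :
    (Ideal.map (algebraMap R (AddMonoidAlgebra R ℤ)) P).IsPrime := by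
  haveI := hP
  set f : AddMonoidAlgebra R ℤ →+* AddMonoidAlgebra (R ⧸ P) ℤ :=
    AddMonoidAlgebra.liftNCRingHom
      ((AddMonoidAlgebra.singleZeroRingHom).comp (Ideal.Quotient.mk P))
      (AddMonoidAlgebra.of (R ⧸ P) ℤ) (fun _ _ => Commute.all _ _) with hfdef
  have hfs : ∀ (n : ℤ) (r : R),
      f (AddMonoidAlgebra.single n r) = AddMonoidAlgebra.single n (Ideal.Quotient.mk P r) := by
    intro n r
    have h0 : f (AddMonoidAlgebra.single n r)
        = AddMonoidAlgebra.singleZeroRingHom (Ideal.Quotient.mk P r)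
          * AddMonoidAlgebra.of (R ⧸ P) ℤ (Multiplicative.ofAdd n) :=
      AddMonoidAlgebra.liftNC_single _ _ _ _
    have h1 : AddMonoidAlgebra.singleZeroRingHom (Ideal.Quotient.mk P r)
        = AddMonoidAlgebra.single (0 : ℤ) (Ideal.Quotient.mk P r) := rfl
    have h2 : f (AddMonoidAlgebra.single n r)
        = AddMonoidAlgebra.single n (Ideal.Quotient.mk P r) := by
      rw [h0, h1, AddMonoidAlgebra.of_apply, toAdd_ofAdd,
        AddMonoidAlgebra.single_mul_single, zero_add, mul_one]
    exact h2
  have hfx : ∀ x : AddMonoidAlgebra R ℤ,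
      f x = AddMonoidAlgebra.mapRingHom ℤ (Ideal.Quotient.mk P) x := by
    intro x
    induction x using AddMonoidAlgebra.induction_linear with
    | zero => simp
    | add a b ha hb => rw [map_add, ha, hb, map_add]
    | single m r => exact (hfs m r).trans (AddMonoidAlgebra.mapRingHom_single _ _ _).symm
  have hker : Ideal.map (algebraMap R (AddMonoidAlgebra R ℤ)) P = RingHom.ker f := by
    ext x
    rw [laurent_map_eq, mem_coeffIdeal, RingHom.mem_ker, hfx]
    constructor
    · intro h
      ext n
      rw [AddMonoidAlgebra.coeff_mapRingHom, AddMonoidAlgebra.coeff_zero, Finsupp.zero_apply,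
        Ideal.Quotient.eq_zero_iff_mem]
      exact h n
    · intro h n
      have := congrArg (fun g => AddMonoidAlgebra.coeff g n) h
      simp only [AddMonoidAlgebra.coeff_mapRingHom] at this
      rw [← Ideal.Quotient.eq_zero_iff_mem]
      simpa using this
  haveI : IsDomain (AddMonoidAlgebra (R ⧸ P) ℤ) := NoZeroDivisors.to_isDomain _
  rw [hker]
  exact RingHom.ker_isPrime f

private lemma laurent_map_comap (Q : Ideal (AddMonoidAlgebra R ℤ))
    (hQ : Ideal.IsHomogeneous (AddMonoidAlgebra.grade R (M := ℤ)) Q) :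
    Ideal.map (algebraMap R (AddMonoidAlgebra R ℤ))
      (Ideal.comap (algebraMap R (AddMonoidAlgebra R ℤ)) Q) = Q := by
  apply le_antisymm (Ideal.map_comap_le)
  intro x hx
  have hx2 : x = x.coeff.sum fun n r => AddMonoidAlgebra.single n r :=
      (AddMonoidAlgebra.sum_coeff_single x).symm
  rw [hx2, Finsupp.sum]
  refine Ideal.sum_mem _ fun n _ => ?_
  have h1 : (AddMonoidAlgebra.single n (x.coeff n) : AddMonoidAlgebra R ℤ) ∈ Q := by
    have := hQ n hx
    rwa [laurent_decompose_apply] at this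
  have h1' : AddMonoidAlgebra.single n (x.coeff n) ∈ Q := h1
  have h5 := Q.mul_mem_left (AddMonoidAlgebra.single (-n) (1 : R)) h1'
  rw [AddMonoidAlgebra.single_mul_single, neg_add_cancel, one_mul] at h5
  have h3 : x.coeff n ∈ Ideal.comap (algebraMap R (AddMonoidAlgebra R ℤ)) Q := by
    rw [Ideal.mem_comap, laurent_algebraMap_eq']
    exact h5
  have h6 := Ideal.mul_mem_left (Ideal.map (algebraMap R (AddMonoidAlgebra R ℤ))
      (Ideal.comap (algebraMap R (AddMonoidAlgebra R ℤ)) Q))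
    (AddMonoidAlgebra.single n (1 : R)) (Ideal.mem_map_of_mem _ h3)
  rw [laurent_algebraMap_eq', AddMonoidAlgebra.single_mul_single, add_zero, one_mul] at h6
  exact h6

end LaurentAux

/-- For a commutative ring `R`, extension of ideals along
`R → R[T, T⁻¹]` (the Laurent polynomial ring, i.e. the monoid algebra `R[ℤ]` with its
natural ℤ-grading) gives a bijection between prime ideals of `R` and homogeneous prime
ideals of `R[T, T⁻¹]`, with inverse given by contraction; in particular every homogeneous
prime ideal of `R[T, T⁻¹]` is extended from (hence generated by) its degree-zero part. -/
theorem laurent_homogeneous_primes_bijection (R : Type*) [CommRing R] :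
    Set.BijOn
        (fun P : Ideal R => Ideal.map (algebraMap R (AddMonoidAlgebra R ℤ)) P)
        {P : Ideal R | P.IsPrime}
        {Q : Ideal (AddMonoidAlgebra R ℤ) |
          Q.IsPrime ∧ Ideal.IsHomogeneous (AddMonoidAlgebra.grade R (M := ℤ)) Q} ∧
      (∀ P : Ideal R, P.IsPrime →
        Ideal.comap (algebraMap R (AddMonoidAlgebra R ℤ))
          (Ideal.map (algebraMap R (AddMonoidAlgebra R ℤ)) P) = P) ∧
      (∀ Q : Ideal (AddMonoidAlgebra R ℤ), Q.IsPrime →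
        Ideal.IsHomogeneous (AddMonoidAlgebra.grade R (M := ℤ)) Q →
          Ideal.map (algebraMap R (AddMonoidAlgebra R ℤ))
            (Ideal.comap (algebraMap R (AddMonoidAlgebra R ℤ)) Q) = Q) := by
  refine ⟨⟨?_, ?_, ?_⟩, fun P _ => laurent_comap_map P, fun Q _ hQ => laurent_map_comap Q hQ⟩
  · intro P hP
    exact ⟨laurent_map_isPrime P hP, laurent_map_isHomogeneous P⟩
  · intro P₁ _ P₂ _ h
    rw [← laurent_comap_map P₁, ← laurent_comap_map P₂]
    exact congrArg _ h
  · rintro Q ⟨hQp, hQh⟩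
    haveI := hQp
    exact ⟨Ideal.comap (algebraMap R (AddMonoidAlgebra R ℤ)) Q,
      Ideal.IsPrime.comap _, laurent_map_comap Q hQh⟩
end
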